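/- The complex CP^2_10 is bistellar equivalent to Kühnel's 9-vertex complex CP^2_9: applying the fifteen listed bistellar moves (i)–(xv) to CP^2_10 yields a 9-vertex complex L, and the vertex map x_{11}↦1, x_{23}↦2, x_{24}↦3, x_{34}↦4, x_{22}↦5, x_{13}↦6, x_{14}↦7, x_{33}↦8, x_{12}↦9 is an isomorphism from L onto CP^2_9. -/

import Mathlib

open Finset

section Generic

variable {V : Type*}

/-- Faces of the simplicial complex generated by a set of facets. -/
def cFaces (X : Set (Finset V)) : Set (Finset V) :=
  {A | A.Nonempty ∧ ∃ F ∈ X, A ⊆ F}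

/-- Number of faces of dimension `k`. -/
noncomputable def fVec (X : Set (Finset V)) (k : ℕ) : ℕ :=
  Set.ncard {A | A ∈ cFaces X ∧ A.card = k + 1}

/-- Faces of the link of a simplex. -/
def lkFaces [DecidableEq V] (X : Set (Finset V)) (σ : Finset V) : Set (Finset V) :=
  {τ | τ.Nonempty ∧ Disjoint τ σ ∧ τ ∪ σ ∈ cFaces X}

/-- Degree of a simplex: number of vertices of its link. -/
noncomputable def degS [DecidableEq V] (X : Set (Finset V)) (σ : Finset V) : ℕ :=
  Set.ncard {v : V | v ∉ σ ∧ insert v σ ∈ cFaces X}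

def TwoNeighbourly [DecidableEq V] (X : Set (Finset V)) : Prop :=
  ∀ u v : V, {u} ∈ cFaces X → {v} ∈ cFaces X → u ≠ v → ({u, v} : Finset V) ∈ cFaces X

/-- Geometric realization of the complex with facet set `X`. -/
def realization [Fintype V] (X : Set (Finset V)) : Set (V → ℝ) :=
  {f | (∀ v, 0 ≤ f v) ∧ (∑ v, f v) = 1 ∧ ∃ F ∈ X, ∀ v, f v ≠ 0 → v ∈ F}

/-- `X` triangulates the `d`-sphere. -/
def TriangulatesSphere [Fintype V] (X : Set (Finset V)) (d : ℕ) : Prop :=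
  Nonempty ((realization X) ≃ₜ (Metric.sphere (0 : EuclideanSpace ℝ (Fin (d + 1))) 1))

/-- The edge graph of a simplicial complex. -/
def cGraph [DecidableEq V] (X : Set (Finset V)) : SimpleGraph V where
  Adj u v := u ≠ v ∧ ({u, v} : Finset V) ∈ cFaces X
  symm := by
    refine ⟨?_⟩
    intro u v h
    exact ⟨h.1.symm, by rw [Finset.pair_comm]; exact h.2⟩
  loopless := ⟨fun v h => h.1 rfl⟩

/-- The subgroup of all vertex permutations which fix `S` pointwise and
map faces to faces. -/
def autRel [DecidableEq V] (X : Set (Finset V)) (S : Set V) : Subgroup (Equiv.Perm V) where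
  carrier := {π | (∀ v ∈ S, π v = v) ∧ ∀ F : Finset V, F ∈ X ↔ F.image π ∈ X}
  one_mem' := by
    refine ⟨fun v _ => rfl, fun F => ?_⟩
    simp
  mul_mem' := by
    rintro a b ⟨ha1, ha2⟩ ⟨hb1, hb2⟩
    refine ⟨fun v hv => ?_, fun F => ?_⟩
    · show a (b v) = v
      rw [hb1 v hv, ha1 v hv]
    · have h : F.image ⇑(a * b) = (F.image ⇑b).image ⇑a := by
        rw [Finset.image_image]; rfl
      rw [h]
      exact (hb2 F).trans (ha2 (F.image ⇑b))
  inv_mem' := by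
    rintro a ⟨ha1, ha2⟩
    refine ⟨fun v hv => ?_, fun F => ?_⟩
    · have := ha1 v hv
      exact a.injective (by simpa using this.symm)
    · have h := ha2 (F.image ⇑a⁻¹)
      have e : (F.image ⇑a⁻¹).image ⇑a = F := by
        rw [Finset.image_image]
        refine Finset.ext fun x => ?_
        simp
      rw [e] at h
      exact h.symm

/-- An icosahedron: a 12-vertex simplicial 2-sphere all whose vertices have degree 5. -/
def IsIcosahedron [Fintype V] [DecidableEq V] (X : Set (Finset V)) : Prop :=
  Fintype.card V = 12 ∧ (∀ F ∈ X, F.card = 3) ∧ (∀ v : V, {v} ∈ cFaces X) ∧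
    (∀ v : V, degS X {v} = 5) ∧ TriangulatesSphere X 2

/-- Two icosahedra on the same vertex set are antimorphic if the identity map
exchanges distance one and distance two. -/
def Antimorphic [DecidableEq V] (X Y : Set (Finset V)) : Prop :=
  ∀ u v : V, u ≠ v →
    (((cGraph X).Adj u v ↔ (cGraph Y).dist u v = 2) ∧
      ((cGraph X).dist u v = 2 ↔ (cGraph Y).Adj u v))

end Generic

/-- The real projective plane, as the quotient of the 2-sphere by the antipodal map. -/
def antipodalSetoid : Setoid (Metric.sphere (0 : EuclideanSpace ℝ (Fin 3)) 1) where
  r x y := (x : EuclideanSpace ℝ (Fin 3)) = y ∨ (x : EuclideanSpace ℝ (Fin 3)) = -y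
  iseqv := by
    constructor
    · intro x; exact Or.inl rfl
    · rintro x y (h | h)
      · exact Or.inl h.symm
      · exact Or.inr (by rw [h, neg_neg])
    · rintro x y z (h1 | h1) (h2 | h2)
      · exact Or.inl (h1.trans h2)
      · exact Or.inr (by rw [h1, h2])
      · exact Or.inr (by rw [h1, h2])
      · exact Or.inl (by rw [h1, h2, neg_neg])

def RealProjectivePlane : Type := Quotient antipodalSetoid

noncomputable instance : TopologicalSpace RealProjectivePlane :=
  instTopologicalSpaceQuotient

abbrev V4 : Type := Fin 4 × Fin 4

def x (i j : Fin 4) : V4 := (i, j)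

/-- Action of a permutation of indices on `V4`, possibly composed with the flip. -/
def permV (σ : Equiv.Perm (Fin 4)) (s : Bool) : V4 → V4 :=
  fun p => if s then (σ p.2, σ p.1) else (σ p.1, σ p.2)

def basic16 : Set (Finset V4) :=
  {({x 0 0, x 1 1, x 2 2, x 0 1, x 0 2} : Finset V4),
   ({x 0 0, x 1 1, x 0 1, x 0 3, x 2 3} : Finset V4),
   ({x 0 0, x 1 1, x 0 3, x 1 3, x 2 3} : Finset V4),
   ({x 0 0, x 1 1, x 1 0, x 1 3, x 2 0} : Finset V4),
   ({x 0 0, x 1 1, x 1 3, x 2 0, x 2 3} : Finset V4)}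

/-- The facets of `(S² × S²)₁₆`. -/
def facets16 : Set (Finset V4) :=
  {F | ∃ σ : Equiv.Perm (Fin 4), Equiv.Perm.sign σ = 1 ∧
    ∃ s : Bool, ∃ B ∈ basic16, F = B.image (permV σ s)}

/-- Sorting an index pair: the quotient map identifying `x i j` with `x j i`. -/
def sortPair : V4 → V4 := fun p => if p.1 ≤ p.2 then p else (p.2, p.1)

def basic10 : Set (Finset V4) :=
  {({x 0 0, x 1 1, x 2 2, x 0 1, x 0 2} : Finset V4),
   ({x 0 0, x 1 1, x 0 1, x 0 3, x 2 3} : Finset V4),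
   ({x 0 0, x 1 1, x 0 3, x 1 3, x 2 3} : Finset V4),
   ({x 0 0, x 1 1, x 0 1, x 0 2, x 1 3} : Finset V4),
   ({x 0 0, x 1 1, x 0 2, x 1 3, x 2 3} : Finset V4)}

/-- The facets of `CP²₁₀`: the orbit of the five basic facets under `A₄` acting
on the indices (followed by sorting each index pair). -/
def facets10 : Set (Finset V4) :=
  {F | ∃ σ : Equiv.Perm (Fin 4), Equiv.Perm.sign σ = 1 ∧
    ∃ B ∈ basic10, F = B.image (fun p => sortPair (σ p.1, σ p.2))}

/-- The cyclic permutation sending each entry of the list to the next one. -/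
def cyc : List V4 → Equiv.Perm V4
  | a :: b :: rest => Equiv.swap a b * cyc (b :: rest)
  | _ => 1

def gPerm : Equiv.Perm V4 :=
  cyc [x 0 1, x 1 0, x 1 3, x 3 1, x 0 3, x 3 0, x 3 2, x 2 3, x 0 2, x 2 0, x 2 1, x 1 2]

def hPerm : Equiv.Perm V4 :=
  cyc [x 0 1, x 0 3, x 1 0, x 1 3, x 2 0] * cyc [x 0 2, x 3 1, x 3 2, x 2 1, x 2 3]

def G12 : Subgroup (Equiv.Perm V4) := Subgroup.closure {gPerm, hPerm}

def basic12A : Finset V4 := {x 0 1, x 0 3, x 1 0, x 1 3, x 2 0}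

def basic12B : Finset V4 := {x 0 1, x 0 2, x 0 3, x 1 0, x 2 0}

/-- The facets of `(S² × S²)₁₂`. -/
def facets12 : Set (Finset V4) :=
  {F | ∃ π ∈ G12, F = basic12A.image ⇑π ∨ F = basic12B.image ⇑π}


/-- The result of the bistellar move `A ↦ B`. -/
def bmove (X : Set (Finset V4)) (A B : Finset V4) : Set (Finset V4) :=
  {F | F ∈ X ∧ ¬ A ⊆ F} ∪ {F | ∃ a ∈ A, F = B ∪ A.erase a}

/-- `A ↦ B` is a valid bistellar move on `X`: `A` is a face, `B` is not, and
the link of `A` is the boundary complex of `B`. -/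
def IsBMove (X : Set (Finset V4)) (A B : Finset V4) : Prop :=
  A ∈ cFaces X ∧ B ∉ cFaces X ∧ lkFaces X A = {τ | τ.Nonempty ∧ τ ⊂ B}

def mA1 : Finset V4 := ({x 1 1, x 2 2, x 3 3} : Finset V4)
def mB1 : Finset V4 := ({x 1 2, x 1 3, x 2 3} : Finset V4)
def mA2 : Finset V4 := ({x 0 0, x 2 2, x 3 3} : Finset V4)
def mB2 : Finset V4 := ({x 0 2, x 0 3, x 2 3} : Finset V4)
def mA3 : Finset V4 := ({x 0 0, x 1 1, x 3 3} : Finset V4)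
def mB3 : Finset V4 := ({x 0 1, x 0 3, x 1 3} : Finset V4)
def mA4 : Finset V4 := ({x 0 3, x 2 2, x 3 3} : Finset V4)
def mB4 : Finset V4 := ({x 0 1, x 0 2, x 2 3} : Finset V4)
def mA5 : Finset V4 := ({x 1 1, x 2 3, x 3 3} : Finset V4)
def mB5 : Finset V4 := ({x 0 2, x 1 2, x 1 3} : Finset V4)
def mA6 : Finset V4 := ({x 1 2, x 2 2, x 3 3} : Finset V4)
def mB6 : Finset V4 := ({x 0 1, x 1 3, x 2 3} : Finset V4)
def mA7 : Finset V4 := ({x 0 1, x 1 1, x 3 3} : Finset V4)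
def mB7 : Finset V4 := ({x 0 2, x 0 3, x 1 3} : Finset V4)
def mA8 : Finset V4 := ({x 2 2, x 3 3} : Finset V4)
def mB8 : Finset V4 := ({x 0 1, x 0 2, x 1 3, x 2 3} : Finset V4)
def mA9 : Finset V4 := ({x 1 1, x 3 3} : Finset V4)
def mB9 : Finset V4 := ({x 0 2, x 0 3, x 1 2, x 1 3} : Finset V4)
def mA10 : Finset V4 := ({x 0 0, x 1 3, x 3 3} : Finset V4)
def mB10 : Finset V4 := ({x 0 1, x 0 3, x 1 2} : Finset V4)
def mA11 : Finset V4 := ({x 0 0, x 0 2, x 3 3} : Finset V4)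
def mB11 : Finset V4 := ({x 0 3, x 1 2, x 2 3} : Finset V4)
def mA12 : Finset V4 := ({x 0 0, x 3 3} : Finset V4)
def mB12 : Finset V4 := ({x 0 1, x 0 3, x 1 2, x 2 3} : Finset V4)
def mA13 : Finset V4 := ({x 3 3, x 0 3, x 1 3} : Finset V4)
def mB13 : Finset V4 := ({x 0 1, x 0 2, x 1 2} : Finset V4)
def mA14 : Finset V4 := ({x 3 3, x 0 3} : Finset V4)
def mB14 : Finset V4 := ({x 2 3, x 0 1, x 0 2, x 1 2} : Finset V4)
def mA15 : Finset V4 := ({x 3 3} : Finset V4)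
def mB15 : Finset V4 := ({x 1 3, x 2 3, x 0 1, x 0 2, x 1 2} : Finset V4)
noncomputable def K0 : Set (Finset V4) := facets10
noncomputable def K1 : Set (Finset V4) := bmove K0 mA1 mB1
noncomputable def K2 : Set (Finset V4) := bmove K1 mA2 mB2
noncomputable def K3 : Set (Finset V4) := bmove K2 mA3 mB3
noncomputable def K4 : Set (Finset V4) := bmove K3 mA4 mB4
noncomputable def K5 : Set (Finset V4) := bmove K4 mA5 mB5
noncomputable def K6 : Set (Finset V4) := bmove K5 mA6 mB6
noncomputable def K7 : Set (Finset V4) := bmove K6 mA7 mB7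
noncomputable def K8 : Set (Finset V4) := bmove K7 mA8 mB8
noncomputable def K9 : Set (Finset V4) := bmove K8 mA9 mB9
noncomputable def K10 : Set (Finset V4) := bmove K9 mA10 mB10
noncomputable def K11 : Set (Finset V4) := bmove K10 mA11 mB11
noncomputable def K12 : Set (Finset V4) := bmove K11 mA12 mB12
noncomputable def K13 : Set (Finset V4) := bmove K12 mA13 mB13
noncomputable def K14 : Set (Finset V4) := bmove K13 mA14 mB14
noncomputable def K15 : Set (Finset V4) := bmove K14 mA15 mB15


/-- The vertex relabelling `x₁₁ ↦ 1, x₂₃ ↦ 2, x₂₄ ↦ 3, x₃₄ ↦ 4, x₂₂ ↦ 5,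
x₁₃ ↦ 6, x₁₄ ↦ 7, x₃₃ ↦ 8, x₁₂ ↦ 9` (written 0-based). -/
def phi9 : V4 → Fin 9 := fun p =>
  if p = x 0 0 then 0 else if p = x 1 2 then 1 else if p = x 1 3 then 2 else
  if p = x 2 3 then 3 else if p = x 1 1 then 4 else if p = x 0 2 then 5 else
  if p = x 0 3 then 6 else if p = x 2 2 then 7 else if p = x 0 1 then 8 else 0

def cp29Facets : Set (Finset (Fin 9)) :=
  {({(0 : Fin 9), (1 : Fin 9), (2 : Fin 9), (6 : Fin 9), (7 : Fin 9)} : Finset (Fin 9)),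
   ({(0 : Fin 9), (1 : Fin 9), (2 : Fin 9), (6 : Fin 9), (8 : Fin 9)} : Finset (Fin 9)),
   ({(0 : Fin 9), (1 : Fin 9), (2 : Fin 9), (7 : Fin 9), (8 : Fin 9)} : Finset (Fin 9)),
   ({(0 : Fin 9), (1 : Fin 9), (3 : Fin 9), (4 : Fin 9), (5 : Fin 9)} : Finset (Fin 9)),
   ({(0 : Fin 9), (1 : Fin 9), (3 : Fin 9), (4 : Fin 9), (8 : Fin 9)} : Finset (Fin 9)),
   ({(0 : Fin 9), (1 : Fin 9), (3 : Fin 9), (5 : Fin 9), (6 : Fin 9)} : Finset (Fin 9)),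
   ({(0 : Fin 9), (1 : Fin 9), (3 : Fin 9), (6 : Fin 9), (8 : Fin 9)} : Finset (Fin 9)),
   ({(0 : Fin 9), (1 : Fin 9), (4 : Fin 9), (5 : Fin 9), (7 : Fin 9)} : Finset (Fin 9)),
   ({(0 : Fin 9), (1 : Fin 9), (4 : Fin 9), (7 : Fin 9), (8 : Fin 9)} : Finset (Fin 9)),
   ({(0 : Fin 9), (1 : Fin 9), (5 : Fin 9), (6 : Fin 9), (7 : Fin 9)} : Finset (Fin 9)),
   ({(0 : Fin 9), (2 : Fin 9), (3 : Fin 9), (4 : Fin 9), (5 : Fin 9)} : Finset (Fin 9)),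
   ({(0 : Fin 9), (2 : Fin 9), (3 : Fin 9), (4 : Fin 9), (6 : Fin 9)} : Finset (Fin 9)),
   ({(0 : Fin 9), (2 : Fin 9), (3 : Fin 9), (5 : Fin 9), (7 : Fin 9)} : Finset (Fin 9)),
   ({(0 : Fin 9), (2 : Fin 9), (3 : Fin 9), (6 : Fin 9), (7 : Fin 9)} : Finset (Fin 9)),
   ({(0 : Fin 9), (2 : Fin 9), (4 : Fin 9), (5 : Fin 9), (8 : Fin 9)} : Finset (Fin 9)),
   ({(0 : Fin 9), (2 : Fin 9), (4 : Fin 9), (6 : Fin 9), (8 : Fin 9)} : Finset (Fin 9)),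
   ({(0 : Fin 9), (2 : Fin 9), (5 : Fin 9), (7 : Fin 9), (8 : Fin 9)} : Finset (Fin 9)),
   ({(0 : Fin 9), (3 : Fin 9), (4 : Fin 9), (6 : Fin 9), (8 : Fin 9)} : Finset (Fin 9)),
   ({(0 : Fin 9), (3 : Fin 9), (5 : Fin 9), (6 : Fin 9), (7 : Fin 9)} : Finset (Fin 9)),
   ({(0 : Fin 9), (4 : Fin 9), (5 : Fin 9), (7 : Fin 9), (8 : Fin 9)} : Finset (Fin 9)),
   ({(1 : Fin 9), (2 : Fin 9), (3 : Fin 9), (4 : Fin 9), (5 : Fin 9)} : Finset (Fin 9)),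
   ({(1 : Fin 9), (2 : Fin 9), (3 : Fin 9), (4 : Fin 9), (7 : Fin 9)} : Finset (Fin 9)),
   ({(1 : Fin 9), (2 : Fin 9), (3 : Fin 9), (5 : Fin 9), (8 : Fin 9)} : Finset (Fin 9)),
   ({(1 : Fin 9), (2 : Fin 9), (3 : Fin 9), (7 : Fin 9), (8 : Fin 9)} : Finset (Fin 9)),
   ({(1 : Fin 9), (2 : Fin 9), (4 : Fin 9), (5 : Fin 9), (6 : Fin 9)} : Finset (Fin 9)),
   ({(1 : Fin 9), (2 : Fin 9), (4 : Fin 9), (6 : Fin 9), (7 : Fin 9)} : Finset (Fin 9)),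
   ({(1 : Fin 9), (2 : Fin 9), (5 : Fin 9), (6 : Fin 9), (8 : Fin 9)} : Finset (Fin 9)),
   ({(1 : Fin 9), (3 : Fin 9), (4 : Fin 9), (7 : Fin 9), (8 : Fin 9)} : Finset (Fin 9)),
   ({(1 : Fin 9), (3 : Fin 9), (5 : Fin 9), (6 : Fin 9), (8 : Fin 9)} : Finset (Fin 9)),
   ({(1 : Fin 9), (4 : Fin 9), (5 : Fin 9), (6 : Fin 9), (7 : Fin 9)} : Finset (Fin 9)),
   ({(2 : Fin 9), (3 : Fin 9), (4 : Fin 9), (6 : Fin 9), (7 : Fin 9)} : Finset (Fin 9)),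
   ({(2 : Fin 9), (3 : Fin 9), (5 : Fin 9), (7 : Fin 9), (8 : Fin 9)} : Finset (Fin 9)),
   ({(2 : Fin 9), (4 : Fin 9), (5 : Fin 9), (6 : Fin 9), (8 : Fin 9)} : Finset (Fin 9)),
   ({(3 : Fin 9), (4 : Fin 9), (6 : Fin 9), (7 : Fin 9), (8 : Fin 9)} : Finset (Fin 9)),
   ({(3 : Fin 9), (5 : Fin 9), (6 : Fin 9), (7 : Fin 9), (8 : Fin 9)} : Finset (Fin 9)),
   ({(4 : Fin 9), (5 : Fin 9), (6 : Fin 9), (7 : Fin 9), (8 : Fin 9)} : Finset (Fin 9))}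

section Aux

/-- Coerced membership in `cFaces`. -/
lemma mem_cFaces_coe (S : Finset (Finset V4)) (A : Finset V4) :
    A ∈ cFaces (↑S : Set (Finset V4)) ↔ A.Nonempty ∧ ∃ F ∈ S, A ⊆ F := Iff.rfl

def bmoveF (S : Finset (Finset V4)) (A B : Finset V4) : Finset (Finset V4) :=
  S.filter (fun F => ¬ A ⊆ F) ∪ A.image (fun a => B ∪ A.erase a)

lemma bmove_coe (S : Finset (Finset V4)) (A B : Finset V4) :
    bmove (↑S) A B = ↑(bmoveF S A B) := by
  ext F
  simp only [bmove, bmoveF, Set.mem_union, Set.mem_setOf_eq, Finset.coe_union,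
    Finset.coe_filter, Finset.mem_coe, Finset.mem_image]
  constructor
  · rintro (⟨h1, h2⟩ | ⟨a, ha, rfl⟩)
    · exact Or.inl ⟨h1, h2⟩
    · exact Or.inr ⟨a, ha, rfl⟩
  · rintro (⟨h1, h2⟩ | ⟨a, ha, rfl⟩)
    · exact Or.inl ⟨h1, h2⟩
    · exact Or.inr ⟨a, ha, rfl⟩

def lkF (S : Finset (Finset V4)) (A : Finset V4) : Finset (Finset V4) :=
  ((S.filter (fun F => A ⊆ F)).biUnion fun F => (F \ A).powerset).filter
    (fun τ => τ.Nonempty)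

def bdF (B : Finset V4) : Finset (Finset V4) :=
  B.powerset.filter (fun τ => τ.Nonempty ∧ τ ≠ B)

lemma lk_coe (S : Finset (Finset V4)) (A : Finset V4) :
    lkFaces (↑S : Set (Finset V4)) A = ↑(lkF S A) := by
  ext τ
  simp only [lkFaces, Set.mem_setOf_eq, mem_cFaces_coe, lkF, Finset.coe_filter,
    Finset.mem_biUnion, Finset.mem_filter, Finset.mem_powerset, Finset.mem_sdiff]
  constructor
  · rintro ⟨hne, hdisj, -, F, hF, hsub⟩
    refine ⟨⟨F, ⟨hF, fun a ha => hsub (Finset.mem_union_right _ ha)⟩,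
      fun a ha => Finset.mem_sdiff.2 ⟨hsub (Finset.mem_union_left _ ha),
        fun hc => (Finset.disjoint_left.1 hdisj ha) hc⟩⟩, hne⟩
  · rintro ⟨⟨F, ⟨hF, hAF⟩, hτ⟩, hne⟩
    refine ⟨hne, Finset.disjoint_left.2 fun a ha hc =>
        (Finset.mem_sdiff.1 (hτ ha)).2 hc, ?_, F, hF, ?_⟩
    · exact ⟨hne.choose, Finset.mem_union_left _ hne.choose_spec⟩
    · intro a ha
      rcases Finset.mem_union.1 ha with h | h
      · exact (Finset.mem_sdiff.1 (hτ h)).1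
      · exact hAF h

lemma bd_coe (B : Finset V4) :
    {τ : Finset V4 | τ.Nonempty ∧ τ ⊂ B} = ↑(bdF B) := by
  ext τ
  simp only [Set.mem_setOf_eq, bdF, Finset.coe_filter, Finset.mem_powerset,
    Finset.ssubset_iff_subset_ne]
  tauto

lemma isBMove_iff (S : Finset (Finset V4)) (A B : Finset V4) :
    IsBMove (↑S) A B ↔ A.Nonempty ∧ (∃ F ∈ S, A ⊆ F) ∧
      ¬ (B.Nonempty ∧ ∃ F ∈ S, B ⊆ F) ∧ lkF S A = bdF B := by
  rw [IsBMove, mem_cFaces_coe, mem_cFaces_coe, lk_coe, bd_coe, Finset.coe_inj]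
  tauto

lemma vert_coe (S : Finset (Finset V4)) :
    {v : V4 | {v} ∈ cFaces (↑S : Set (Finset V4))} = ↑(S.biUnion id) := by
  ext v
  simp only [Set.mem_setOf_eq, mem_cFaces_coe, Finset.singleton_nonempty, true_and,
    Finset.singleton_subset_iff, Finset.coe_biUnion, Set.mem_iUnion, Finset.mem_coe, id_eq]
  tauto

def B10f : Finset (Finset V4) :=
  {({x 0 0, x 1 1, x 2 2, x 0 1, x 0 2} : Finset V4),
   ({x 0 0, x 1 1, x 0 1, x 0 3, x 2 3} : Finset V4),
   ({x 0 0, x 1 1, x 0 3, x 1 3, x 2 3} : Finset V4),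
   ({x 0 0, x 1 1, x 0 1, x 0 2, x 1 3} : Finset V4),
   ({x 0 0, x 1 1, x 0 2, x 1 3, x 2 3} : Finset V4)}

lemma basic10_coe : basic10 = ↑B10f := by
  ext B
  simp [basic10, B10f]

def K0f : Finset (Finset V4) :=
  (Finset.univ.filter (fun σ : Equiv.Perm (Fin 4) => Equiv.Perm.sign σ = 1)).biUnion
    (fun σ => B10f.image (fun B => B.image (fun p => sortPair (σ p.1, σ p.2))))

lemma facets10_coe : facets10 = ↑K0f := by
  ext F
  simp only [facets10, Set.mem_setOf_eq, basic10_coe, Finset.mem_coe, K0f,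
    Finset.mem_biUnion, Finset.mem_filter, Finset.mem_univ, true_and, Finset.mem_image]
  constructor
  · rintro ⟨σ, hσ, B, hB, rfl⟩
    exact ⟨σ, hσ, B, hB, rfl⟩
  · rintro ⟨σ, hσ, B, hB, rfl⟩
    exact ⟨σ, hσ, B, hB, rfl⟩

end Aux

def K1f := bmoveF K0f mA1 mB1
def K2f := bmoveF K1f mA2 mB2
def K3f := bmoveF K2f mA3 mB3
def K4f := bmoveF K3f mA4 mB4
def K5f := bmoveF K4f mA5 mB5
def K6f := bmoveF K5f mA6 mB6
def K7f := bmoveF K6f mA7 mB7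
def K8f := bmoveF K7f mA8 mB8
def K9f := bmoveF K8f mA9 mB9
def K10f := bmoveF K9f mA10 mB10
def K11f := bmoveF K10f mA11 mB11
def K12f := bmoveF K11f mA12 mB12
def K13f := bmoveF K12f mA13 mB13
def K14f := bmoveF K13f mA14 mB14
def K15f := bmoveF K14f mA15 mB15

def C9f : Finset (Finset (Fin 9)) :=
  {({0,1,2,6,7} : Finset (Fin 9)), {0,1,2,6,8}, {0,1,2,7,8}, {0,1,3,4,5}, {0,1,3,4,8},
   {0,1,3,5,6}, {0,1,3,6,8}, {0,1,4,5,7}, {0,1,4,7,8}, {0,1,5,6,7}, {0,2,3,4,5},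
   {0,2,3,4,6}, {0,2,3,5,7}, {0,2,3,6,7}, {0,2,4,5,8}, {0,2,4,6,8}, {0,2,5,7,8},
   {0,3,4,6,8}, {0,3,5,6,7}, {0,4,5,7,8}, {1,2,3,4,5}, {1,2,3,4,7}, {1,2,3,5,8},
   {1,2,3,7,8}, {1,2,4,5,6}, {1,2,4,6,7}, {1,2,5,6,8}, {1,3,4,7,8}, {1,3,5,6,8},
   {1,4,5,6,7}, {2,3,4,6,7}, {2,3,5,7,8}, {2,4,5,6,8}, {3,4,6,7,8}, {3,5,6,7,8},
   {4,5,6,7,8}}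

/-- The decidable content of `IsBMove` for finite complexes. -/
abbrev chk (S : Finset (Finset V4)) (A B : Finset V4) : Prop :=
  A.Nonempty ∧ (∃ F ∈ S, A ⊆ F) ∧ ¬ (B.Nonempty ∧ ∃ F ∈ S, B ⊆ F) ∧ lkF S A = bdF B

set_option maxRecDepth 1000000 in
set_option maxHeartbeats 4000000 in
set_option synthInstance.maxHeartbeats 2000000 in
set_option synthInstance.maxSize 1024 in
lemma bigCheck : chk K0f mA1 mB1 ∧ chk K1f mA2 mB2 ∧ chk K2f mA3 mB3 ∧
    chk K3f mA4 mB4 ∧ chk K4f mA5 mB5 ∧ chk K5f mA6 mB6 ∧ chk K6f mA7 mB7 ∧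
    chk K7f mA8 mB8 ∧ chk K8f mA9 mB9 ∧ chk K9f mA10 mB10 ∧ chk K10f mA11 mB11 ∧
    chk K11f mA12 mB12 ∧ chk K12f mA13 mB13 ∧ chk K13f mA14 mB14 ∧ chk K14f mA15 mB15 ∧
    (K15f.biUnion id).card = 9 ∧ ((K15f.biUnion id).image phi9).card = 9 ∧
    K15f.image (fun G => G.image phi9) = C9f := by decide

lemma e0 : K0 = ↑K0f := facets10_coe
lemma e1 : K1 = ↑K1f := by show bmove K0 mA1 mB1 = _; rw [e0, bmove_coe]; rfl
lemma e2 : K2 = ↑K2f := by show bmove K1 mA2 mB2 = _; rw [e1, bmove_coe]; rfl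
lemma e3 : K3 = ↑K3f := by show bmove K2 mA3 mB3 = _; rw [e2, bmove_coe]; rfl
lemma e4 : K4 = ↑K4f := by show bmove K3 mA4 mB4 = _; rw [e3, bmove_coe]; rfl
lemma e5 : K5 = ↑K5f := by show bmove K4 mA5 mB5 = _; rw [e4, bmove_coe]; rfl
lemma e6 : K6 = ↑K6f := by show bmove K5 mA6 mB6 = _; rw [e5, bmove_coe]; rfl
lemma e7 : K7 = ↑K7f := by show bmove K6 mA7 mB7 = _; rw [e6, bmove_coe]; rfl
lemma e8 : K8 = ↑K8f := by show bmove K7 mA8 mB8 = _; rw [e7, bmove_coe]; rfl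
lemma e9 : K9 = ↑K9f := by show bmove K8 mA9 mB9 = _; rw [e8, bmove_coe]; rfl
lemma e10 : K10 = ↑K10f := by show bmove K9 mA10 mB10 = _; rw [e9, bmove_coe]; rfl
lemma e11 : K11 = ↑K11f := by show bmove K10 mA11 mB11 = _; rw [e10, bmove_coe]; rfl
lemma e12 : K12 = ↑K12f := by show bmove K11 mA12 mB12 = _; rw [e11, bmove_coe]; rfl
lemma e13 : K13 = ↑K13f := by show bmove K12 mA13 mB13 = _; rw [e12, bmove_coe]; rfl
lemma e14 : K14 = ↑K14f := by show bmove K13 mA14 mB14 = _; rw [e13, bmove_coe]; rfl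
lemma e15 : K15 = ↑K15f := by show bmove K14 mA15 mB15 = _; rw [e14, bmove_coe]; rfl

set_option maxHeartbeats 4000000 in
/-- the fifteen listed bistellar moves are valid, they transform
`CP²₁₀` into a 9-vertex complex `L = K15`, and `phi9` is an isomorphism from
`L` onto Kühnel's `CP²₉`. -/
theorem stmt_13 :
    IsBMove K0 mA1 mB1 ∧ IsBMove K1 mA2 mB2 ∧ IsBMove K2 mA3 mB3 ∧
    IsBMove K3 mA4 mB4 ∧ IsBMove K4 mA5 mB5 ∧ IsBMove K5 mA6 mB6 ∧
    IsBMove K6 mA7 mB7 ∧ IsBMove K7 mA8 mB8 ∧ IsBMove K8 mA9 mB9 ∧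
    IsBMove K9 mA10 mB10 ∧ IsBMove K10 mA11 mB11 ∧ IsBMove K11 mA12 mB12 ∧
    IsBMove K12 mA13 mB13 ∧ IsBMove K13 mA14 mB14 ∧ IsBMove K14 mA15 mB15 ∧
    Set.ncard {v : V4 | {v} ∈ cFaces K15} = 9 ∧
    Set.InjOn phi9 {v : V4 | {v} ∈ cFaces K15} ∧
    {F | ∃ G ∈ K15, F = G.image phi9} = cp29Facets := by
  obtain ⟨h1, h2, h3, h4, h5, h6, h7, h8, h9, h10, h11, h12, h13, h14, h15,
    hc1, hc2, him⟩ := bigCheck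
  have hv : {v : V4 | {v} ∈ cFaces K15} = ↑(K15f.biUnion id) := by
    rw [e15, vert_coe]
  have himg : {F | ∃ G ∈ K15, F = G.image phi9}
      = ↑(K15f.image (fun G => G.image phi9)) := by
    rw [e15]
    ext F
    simp only [Set.mem_setOf_eq, Finset.mem_coe, Finset.coe_image, Set.mem_image,
      Finset.mem_coe, Finset.mem_image]
    constructor
    · rintro ⟨G, hG, rfl⟩; exact ⟨G, hG, rfl⟩
    · rintro ⟨G, hG, rfl⟩; exact ⟨G, hG, rfl⟩
  refine ⟨by rw [e0, isBMove_iff]; exact h1, by rw [e1, isBMove_iff]; exact h2,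
    by rw [e2, isBMove_iff]; exact h3, by rw [e3, isBMove_iff]; exact h4,
    by rw [e4, isBMove_iff]; exact h5, by rw [e5, isBMove_iff]; exact h6,
    by rw [e6, isBMove_iff]; exact h7, by rw [e7, isBMove_iff]; exact h8,
    by rw [e8, isBMove_iff]; exact h9, by rw [e9, isBMove_iff]; exact h10,
    by rw [e10, isBMove_iff]; exact h11, by rw [e11, isBMove_iff]; exact h12,
    by rw [e12, isBMove_iff]; exact h13, by rw [e13, isBMove_iff]; exact h14,
    by rw [e14, isBMove_iff]; exact h15, ?_, ?_, ?_⟩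
  · rw [hv, Set.ncard_coe_finset]; exact hc1
  · rw [hv]
    exact Finset.injOn_of_card_image_eq (by rw [hc2, hc1])
  · rw [himg, him]
    ext F
    simp [C9f, cp29Facets]
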